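/- Let E be a Banach space which contains a proper closed subspace F that is isomorphic to E (as a topological vector space) and complemented in E. Then multiplication in the Banach algebra 𝓑(E) of all bounded linear operators on E is not open. -/

import Mathlib

open Pointwise

/-- If a Banach space `E` contains a proper closed complemented subspace `F` isomorphic
to `E`, then multiplication (composition) in `𝓑(E)` is not open. -/
theorem BE_multiplication_not_open
    {𝕜 : Type*} [RCLike 𝕜] {E : Type*} [NormedAddCommGroup E] [NormedSpace 𝕜 E]
    [CompleteSpace E] (F : Submodule 𝕜 E) (hclosed : IsClosed (F : Set E))
    (hproper : F ≠ ⊤) (hcompl : Submodule.ClosedComplemented F)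
    (hiso : Nonempty (F ≃L[𝕜] E)) :
    ¬ ∀ (T S : E →L[𝕜] E), ∀ ε > 0, ∃ δ > 0,
        Metric.ball (T * S) δ ⊆ Metric.ball T ε * Metric.ball S ε := by
  intro h
  obtain ⟨e⟩ := hiso
  obtain ⟨p, hp⟩ := hcompl
  set T : E →L[𝕜] E := F.subtypeL.comp (e.symm : E →L[𝕜] F) with hT
  set S : E →L[𝕜] E := (e : F →L[𝕜] E).comp p with hS
  have hST : S * T = 1 := by
    ext x
    simp [hS, hT, ContinuousLinearMap.mul_apply, hp]
  -- T is not surjective (its range lies in F)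
  have hTmem : ∀ x, T x ∈ F := fun x => (e.symm x).2
  have hTnotunit : ¬ IsUnit T := by
    rintro ⟨w, hw⟩
    apply hproper
    rw [Submodule.eq_top_iff']
    intro y
    have : T ((w.inv : E →L[𝕜] E) y) = y := by
      have := congrArg (fun f : E →L[𝕜] E => f y) w.mul_inv
      simpa [hw, ContinuousLinearMap.mul_apply] using this
    rw [← this]; exact hTmem _
  -- S ≠ 0
  have hSnorm : 0 < ‖S‖ := by
    rcases eq_or_lt_of_le (norm_nonneg S) with h0 | h0
    · exfalso
      have hS0 : S = 0 := by rwa [eq_comm, norm_eq_zero] at h0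
      apply hproper
      rw [Submodule.eq_top_iff']
      intro y
      have : (1 : E →L[𝕜] E) y = 0 := by rw [← hST, hS0]; simp
      simp only [ContinuousLinearMap.one_apply] at this
      rw [this]; exact F.zero_mem
    · exact h0
  set ε : ℝ := (2 * ‖S‖)⁻¹ with hε
  have hεpos : 0 < ε := by positivity
  obtain ⟨δ, hδpos, hδ⟩ := h T S ε hεpos
  set Q : E →L[𝕜] E := T * S with hQ
  set η : ℝ := δ / (2 * (‖(1 : E →L[𝕜] E) - Q‖ + 1)) with hη
  have hηpos : 0 < η := by positivity
  set a : 𝕜 := (η : 𝕜) with ha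
  have hane : a ≠ 0 := by
    simp [ha, RCLike.ofReal_ne_zero]
    exact ne_of_gt hηpos
  have hQQ : Q * Q = Q := by
    rw [hQ, mul_assoc T S (T * S), ← mul_assoc S T S, hST, one_mul]
  set W : E →L[𝕜] E := Q + a • (1 - Q) with hW
  set W' : E →L[𝕜] E := Q + a⁻¹ • (1 - Q) with hW'
  have hQP : Q * (1 - Q) = 0 := by rw [mul_sub, hQQ, mul_one, sub_self]
  have hPQ : (1 - Q) * Q = 0 := by rw [sub_mul, hQQ, one_mul, sub_self]
  have hPP : (1 - Q) * (1 - Q) = 1 - Q := by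
    have h1 : (1 - Q) * (1 - Q) = 1 - Q - (Q - Q * Q) := by noncomm_ring
    rw [h1, hQQ, sub_self, sub_zero]
  have hWW' : W * W' = 1 := by
    rw [hW, hW']
    simp only [mul_add, add_mul, smul_mul_assoc, mul_smul_comm, smul_smul,
      hQQ, hQP, hPQ, hPP, smul_zero, add_zero, zero_add]
    rw [inv_mul_cancel₀ hane, one_smul, add_sub_cancel]
  have hW'W : W' * W = 1 := by
    rw [hW, hW']
    simp only [mul_add, add_mul, smul_mul_assoc, mul_smul_comm, smul_smul,
      hQQ, hQP, hPQ, hPP, smul_zero, add_zero, zero_add]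
    rw [mul_inv_cancel₀ hane, one_smul, add_sub_cancel]
  -- W is in the ball around Q = T * S
  have hWball : W ∈ Metric.ball (T * S) δ := by
    rw [Metric.mem_ball, dist_eq_norm, ← hQ]
    have h1 : W - Q = a • (1 - Q) := by rw [hW, add_sub_cancel_left]
    rw [h1, norm_smul a ((1 : E →L[𝕜] E) - Q)]
    have hnorma : ‖a‖ = η := by
      rw [ha, RCLike.norm_ofReal, abs_of_pos hηpos]
    rw [hnorma]
    calc η * ‖(1 : E →L[𝕜] E) - Q‖
        < η * (2 * (‖(1 : E →L[𝕜] E) - Q‖ + 1)) := by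
          apply mul_lt_mul_of_pos_left _ hηpos
          nlinarith [norm_nonneg ((1 : E →L[𝕜] E) - Q)]
      _ = δ := by
          rw [hη]
          field_simp
  obtain ⟨A, hA, B, hB, hAB⟩ := hδ hWball
  have hAB : A * B = W := hAB
  -- S * A is a unit
  have hSA : ‖1 - S * A‖ < 1 := by
    have h1 : (1 : E →L[𝕜] E) - S * A = S * (T - A) := by
      rw [mul_sub, hST]
    rw [h1]
    calc ‖S * (T - A)‖ ≤ ‖S‖ * ‖T - A‖ := norm_mul_le _ _
      _ < ‖S‖ * ε := by
          apply mul_lt_mul_of_pos_left _ hSnorm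
          rw [← dist_eq_norm, dist_comm]
          exact Metric.mem_ball.mp hA
      _ = 1 / 2 := by rw [hε]; field_simp
      _ < 1 := by norm_num
  have hSAunit : IsUnit (S * A) := by
    have := (Units.oneSub (1 - S * A) hSA).isUnit
    rwa [Units.val_oneSub, sub_sub_cancel] at this
  -- A is injective
  have hAinj : Function.Injective A := by
    obtain ⟨u, hu⟩ := hSAunit
    intro x y hxy
    have h1 : (S * A) x = (S * A) y := by
      simp [ContinuousLinearMap.mul_apply, hxy]
    have h2 : ((u⁻¹ : (E →L[𝕜] E)ˣ) : E →L[𝕜] E) ((S * A) x)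
        = ((u⁻¹ : (E →L[𝕜] E)ˣ) : E →L[𝕜] E) ((S * A) y) := by rw [h1]
    have h3 : ∀ z, ((u⁻¹ : (E →L[𝕜] E)ˣ) : E →L[𝕜] E) ((S * A) z) = z := by
      intro z
      have := congrArg (fun f : E →L[𝕜] E => f z) u.inv_mul
      simpa [hu, ContinuousLinearMap.mul_apply] using this
    rw [h3, h3] at h2
    exact h2
  -- A has a right inverse C := B * W'
  set C : E →L[𝕜] E := B * W' with hC
  have hAC : A * C = 1 := by
    rw [hC, ← mul_assoc, hAB, hWW']
  -- then C * A = 1 by injectivity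
  have hCA : C * A = 1 := by
    ext x
    apply hAinj
    have := congrArg (fun f : E →L[𝕜] E => f (A x)) hAC
    simp only [ContinuousLinearMap.mul_apply, ContinuousLinearMap.one_apply] at this ⊢
    exact this
  have hAunit : IsUnit A := ⟨⟨A, C, hAC, hCA⟩, rfl⟩
  -- then S is a unit, then T is a unit: contradiction
  have hCunit : IsUnit C := ⟨⟨C, A, hCA, hAC⟩, rfl⟩
  have hSunit : IsUnit S := by
    have : S = (S * A) * C := by rw [mul_assoc, hAC, mul_one]
    rw [this]
    exact hSAunit.mul hCunit
  apply hTnotunit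
  obtain ⟨v, hv⟩ := hSunit
  have : T = ((v⁻¹ : (E →L[𝕜] E)ˣ) : E →L[𝕜] E) := by
    have h1 : ((v⁻¹ : (E →L[𝕜] E)ˣ) : E →L[𝕜] E) * (S * T)
        = ((v⁻¹ : (E →L[𝕜] E)ˣ) : E →L[𝕜] E) := by rw [hST, mul_one]
    rw [← mul_assoc, ← hv] at h1
    rw [← h1]
    simp
  rw [this]
  exact (v⁻¹).isUnit
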